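/- Second-order boundedness of the population R-loss in the nuisance direction: for any nuisance g = (m, e) and intermediate nuisance g̃, with θ bounded coordinatewise by M, |D_g D_g L(θ, g̃)[g - g0, g - g0]| ≤ 2(1 + d·M²)·‖g - g0‖²_{L2}, where ‖g - g0‖²_{L2} = E[‖g(W) - g0(W)‖²]. -/

import Mathlib

open MeasureTheory

/-- Pointwise Cauchy–Schwarz-type bound: `(-a + p)² ≤ (1+s)(a²+B)` when `p² ≤ s B`. -/
lemma stmt9_aux_cs (a p s B : ℝ) (hp : p ^ 2 ≤ s * B) (hs : 0 ≤ s) (hB : 0 ≤ B) :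
    (-a + p) ^ 2 ≤ (1 + s) * (a ^ 2 + B) := by
  rcases eq_or_lt_of_le hB with hB0 | hB0
  · have hp0 : p = 0 := by nlinarith [sq_nonneg p]
    subst hp0
    rw [← hB0]
    nlinarith [mul_nonneg hs (sq_nonneg a)]
  · have key : 0 ≤ B * ((1 + s) * (a ^ 2 + B) - (-a + p) ^ 2) := by
      nlinarith [sq_nonneg (B + a * p), mul_nonneg (sq_nonneg a) (sub_nonneg.mpr hp),
        mul_nonneg hB (sub_nonneg.mpr hp)]
    by_contra h
    push_neg at h
    have : B * ((1 + s) * (a ^ 2 + B) - (-a + p) ^ 2) < 0 :=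
      mul_neg_of_pos_of_neg hB0 (by linarith)
    linarith

/-- The second iterated derivative of a quadratic polynomial at `0`. -/
lemma stmt9_poly_iter (c0 c1 c2 : ℝ) :
    iteratedDeriv 2 (fun t : ℝ => c0 + t * c1 + t ^ 2 * c2) 0 = 2 * c2 := by
  have hd1 : ∀ t : ℝ, HasDerivAt (fun t : ℝ => c0 + t * c1 + t ^ 2 * c2)
      (c1 + 2 * t * c2) t := by
    intro t
    have h1 : HasDerivAt (fun t : ℝ => c0 + t * c1) c1 t := by
      simpa using ((hasDerivAt_id' t).mul_const c1).const_add c0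
    have h2 : HasDerivAt (fun t : ℝ => t ^ 2 * c2) (2 * t * c2) t := by
      simpa using (hasDerivAt_pow 2 t).mul_const c2
    exact h1.add h2
  have hder : deriv (fun t : ℝ => c0 + t * c1 + t ^ 2 * c2) = fun t => c1 + 2 * t * c2 :=
    funext fun t => (hd1 t).deriv
  have hd2 : ∀ t : ℝ, HasDerivAt (fun t : ℝ => c1 + 2 * t * c2) (2 * c2) t := by
    intro t
    have h2 : HasDerivAt (fun t : ℝ => 2 * t * c2) (2 * c2) t := by
      simpa using ((hasDerivAt_id t).const_mul 2).mul_const c2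
    exact h2.const_add c1
  rw [show (2:ℕ) = 1 + 1 from rfl, iteratedDeriv_succ, iteratedDeriv_one, hder]
  exact (hd2 0).deriv

/-- Second-order boundedness of the population R-loss in the nuisance direction:
with `θ` coordinatewise bounded by `M`,
`|D_g D_g L(θ, g̃)[g - g0, g - g0]| ≤ 2 (1 + d M²) ‖g - g0‖²_{L²}`,
where the second directional derivative is `d²/dt² L(θ, g̃ + t (g - g0)) |_{t=0}` and
`‖g - g0‖²_{L²} = E[‖g(W) - g0(W)‖²]` for the nuisance `g = (m, e)`. -/
theorem stmt_9
    {Ω 𝓦 : Type*} [MeasurableSpace Ω] [MeasurableSpace 𝓦]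
    (μ : Measure Ω) [IsProbabilityMeasure μ] (d : ℕ) (M : ℝ)
    (W : Ω → 𝓦) (T : Ω → Fin d → ℝ) (Y : Ω → ℝ)
    (θ : 𝓦 → Fin d → ℝ)
    (m m0 mtilde : 𝓦 → ℝ) (e e0 etilde : 𝓦 → Fin d → ℝ)
    (L : (𝓦 → ℝ) → (𝓦 → Fin d → ℝ) → ℝ)
    (hL : ∀ mm ee, L mm ee =
      ∫ ω, (Y ω - mm (W ω) - ∑ i, (T ω i - ee (W ω) i) * θ (W ω) i) ^ 2 ∂μ)
    (hWmeas : Measurable W) (hTmeas : Measurable T)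
    (hθbdd : ∀ w i, |θ w i| ≤ M)
    (hYL2 : MemLp Y 2 μ) (hTL2 : ∀ i, MemLp (fun ω => T ω i) 2 μ)
    (hgL2 : Integrable (fun ω =>
      (m (W ω) - m0 (W ω)) ^ 2 + ∑ i, (e (W ω) i - e0 (W ω) i) ^ 2) μ) :
    |iteratedDeriv 2 (fun t : ℝ =>
        L (fun w => mtilde w + t * (m w - m0 w))
          (fun w i => etilde w i + t * (e w i - e0 w i))) 0|
      ≤ 2 * (1 + (d : ℝ) * M ^ 2) *
        ∫ ω, (m (W ω) - m0 (W ω)) ^ 2 + ∑ i, (e (W ω) i - e0 (W ω) i) ^ 2 ∂μ := by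
  classical
  set A : Ω → ℝ := fun ω =>
    Y ω - mtilde (W ω) - ∑ i, (T ω i - etilde (W ω) i) * θ (W ω) i with hA
  set C : Ω → ℝ := fun ω =>
    -(m (W ω) - m0 (W ω)) + ∑ i, (e (W ω) i - e0 (W ω) i) * θ (W ω) i with hC
  set G : Ω → ℝ := fun ω =>
    (m (W ω) - m0 (W ω)) ^ 2 + ∑ i, (e (W ω) i - e0 (W ω) i) ^ 2 with hG
  set F : ℝ → ℝ := fun t : ℝ =>
    L (fun w => mtilde w + t * (m w - m0 w))
      (fun w i => etilde w i + t * (e w i - e0 w i)) with hFdef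
  -- rewrite F
  have hF : ∀ t, F t = ∫ ω, (A ω + t * C ω) ^ 2 ∂μ := by
    intro t
    rw [hFdef]
    simp only
    rw [hL]
    congr 1
    funext ω
    have hsum : ∑ i, (T ω i - (etilde (W ω) i + t * (e (W ω) i - e0 (W ω) i))) * θ (W ω) i
        = (∑ i, (T ω i - etilde (W ω) i) * θ (W ω) i)
          - t * ∑ i, (e (W ω) i - e0 (W ω) i) * θ (W ω) i := by
      rw [Finset.mul_sum, ← Finset.sum_sub_distrib]
      exact Finset.sum_congr rfl fun i _ => by ring
    rw [hsum, hA, hC]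
    ring
  -- pointwise bound on C²
  have hCG : ∀ ω, C ω ^ 2 ≤ (1 + (d : ℝ) * M ^ 2) * G ω := by
    intro ω
    have hp : (∑ i, (e (W ω) i - e0 (W ω) i) * θ (W ω) i) ^ 2
        ≤ (∑ i : Fin d, θ (W ω) i ^ 2) * ∑ i, (e (W ω) i - e0 (W ω) i) ^ 2 := by
      have h := Finset.sum_mul_sq_le_sq_mul_sq Finset.univ
        (fun i => e (W ω) i - e0 (W ω) i) (fun i => θ (W ω) i)
      calc (∑ i, (e (W ω) i - e0 (W ω) i) * θ (W ω) i) ^ 2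
          ≤ (∑ i, (e (W ω) i - e0 (W ω) i) ^ 2) * ∑ i : Fin d, θ (W ω) i ^ 2 := h
        _ = _ := by ring
    have hsle : (∑ i : Fin d, θ (W ω) i ^ 2) ≤ (d : ℝ) * M ^ 2 := by
      calc (∑ i : Fin d, θ (W ω) i ^ 2) ≤ ∑ _i : Fin d, M ^ 2 := by
            apply Finset.sum_le_sum
            intro i _
            have := hθbdd (W ω) i
            nlinarith [abs_nonneg (θ (W ω) i), sq_abs (θ (W ω) i)]
        _ = (d : ℝ) * M ^ 2 := by simp [mul_comm]
    have hsnn : (0:ℝ) ≤ ∑ i : Fin d, θ (W ω) i ^ 2 :=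
      Finset.sum_nonneg fun i _ => sq_nonneg _
    have hBnn : (0:ℝ) ≤ ∑ i, (e (W ω) i - e0 (W ω) i) ^ 2 :=
      Finset.sum_nonneg fun i _ => sq_nonneg _
    have key := stmt9_aux_cs (m (W ω) - m0 (W ω))
      (∑ i, (e (W ω) i - e0 (W ω) i) * θ (W ω) i)
      (∑ i : Fin d, θ (W ω) i ^ 2) (∑ i, (e (W ω) i - e0 (W ω) i) ^ 2) hp hsnn hBnn
    have hGnn : 0 ≤ G ω := add_nonneg (sq_nonneg _) hBnn
    calc C ω ^ 2 ≤ (1 + ∑ i : Fin d, θ (W ω) i ^ 2) * G ω := key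
      _ ≤ (1 + (d : ℝ) * M ^ 2) * G ω := by
          apply mul_le_mul_of_nonneg_right _ hGnn
          linarith
  have hGnn : ∀ ω, 0 ≤ G ω := fun ω =>
    add_nonneg (sq_nonneg _) (Finset.sum_nonneg fun i _ => sq_nonneg _)
  have hGint : Integrable G μ := hgL2
  have hRHSnn : 0 ≤ 2 * (1 + (d : ℝ) * M ^ 2) * ∫ ω, G ω ∂μ := by
    apply mul_nonneg (by positivity)
    exact integral_nonneg hGnn
  by_cases hcase : Integrable (fun ω => A ω ^ 2) μ ∧ Integrable (fun ω => A ω * C ω) μ ∧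
      Integrable (fun ω => C ω ^ 2) μ
  · -- nice case: F is a quadratic polynomial in t
    obtain ⟨hP, hQ, hR⟩ := hcase
    have hQ2 : Integrable (fun ω => 2 * (A ω * C ω)) μ := hQ.const_mul 2
    have hFpoly : F = fun t => (∫ ω, A ω ^ 2 ∂μ) + t * (2 * ∫ ω, A ω * C ω ∂μ)
        + t ^ 2 * ∫ ω, C ω ^ 2 ∂μ := by
      funext t
      rw [hF]
      have hre : (fun ω => (A ω + t * C ω) ^ 2)
          = fun ω => (A ω ^ 2 + t * (2 * (A ω * C ω))) + t ^ 2 * C ω ^ 2 :=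
        funext fun ω => by ring
      have i2 : Integrable (fun ω => t * (2 * (A ω * C ω))) μ := hQ2.const_mul t
      have i3 : Integrable (fun ω => t ^ 2 * C ω ^ 2) μ := hR.const_mul (t ^ 2)
      have i1 : Integrable (fun ω => A ω ^ 2 + t * (2 * (A ω * C ω))) μ := hP.add i2
      rw [hre, integral_add i1 i3, integral_add hP i2, integral_const_mul,
        integral_const_mul, integral_const_mul]
    have hiter : iteratedDeriv 2 F 0 = 2 * ∫ ω, C ω ^ 2 ∂μ := by
      rw [hFpoly]
      exact stmt9_poly_iter _ _ _
    rw [hFdef] at hiter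
    rw [hiter]
    have hc2nn : (0:ℝ) ≤ ∫ ω, C ω ^ 2 ∂μ := integral_nonneg fun ω => sq_nonneg _
    rw [abs_of_nonneg (by linarith : (0:ℝ) ≤ 2 * ∫ ω, C ω ^ 2 ∂μ)]
    have hmono : (∫ ω, C ω ^ 2 ∂μ) ≤ (1 + (d : ℝ) * M ^ 2) * ∫ ω, G ω ∂μ := by
      rw [← integral_const_mul]
      exact integral_mono hR (hGint.const_mul _) hCG
    calc 2 * ∫ ω, C ω ^ 2 ∂μ ≤ 2 * ((1 + (d : ℝ) * M ^ 2) * ∫ ω, G ω ∂μ) := by linarith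
      _ = 2 * (1 + (d : ℝ) * M ^ 2) * ∫ ω, G ω ∂μ := by ring
  · -- degenerate case: the integrand is integrable for at most two values of t
    set g : ℝ → Ω → ℝ := fun t ω => (A ω + t * C ω) ^ 2 with hg
    have hS : ∀ t₁ t₂ t₃ : ℝ, t₁ ≠ t₂ → t₁ ≠ t₃ → t₂ ≠ t₃ →
        Integrable (g t₁) μ → Integrable (g t₂) μ → Integrable (g t₃) μ → False := by
      intro t₁ t₂ t₃ h12 h13 h23 hi1 hi2 hi3
      have key : ∀ ta tb : ℝ, ta ≠ tb → Integrable (g ta) μ → Integrable (g tb) μ →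
          Integrable (fun ω => 2 * (A ω * C ω) + (ta + tb) * C ω ^ 2) μ := by
        intro ta tb hab hia hib
        have hne : ta - tb ≠ 0 := sub_ne_zero.mpr hab
        have h1 : Integrable (fun ω => g ta ω - g tb ω) μ := hia.sub hib
        have h2 : Integrable (fun ω => (ta - tb)⁻¹ * (g ta ω - g tb ω)) μ :=
          h1.const_mul _
        have heq : (fun ω => (ta - tb)⁻¹ * (g ta ω - g tb ω))
            = fun ω => 2 * (A ω * C ω) + (ta + tb) * C ω ^ 2 := by
          funext ω
          simp only [hg]
          field_simp
          ring
        rwa [heq] at h2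
      have k12 := key t₁ t₂ h12 hi1 hi2
      have k13 := key t₁ t₃ h13 hi1 hi3
      have hv : Integrable (fun ω => C ω ^ 2) μ := by
        have h1 : Integrable (fun ω => (2 * (A ω * C ω) + (t₁ + t₂) * C ω ^ 2)
            - (2 * (A ω * C ω) + (t₁ + t₃) * C ω ^ 2)) μ := k12.sub k13
        have h2 : Integrable (fun ω => (t₂ - t₃)⁻¹ *
            ((2 * (A ω * C ω) + (t₁ + t₂) * C ω ^ 2)
              - (2 * (A ω * C ω) + (t₁ + t₃) * C ω ^ 2))) μ := h1.const_mul _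
        have hne : t₂ - t₃ ≠ 0 := sub_ne_zero.mpr h23
        have heq : (fun ω => (t₂ - t₃)⁻¹ *
            ((2 * (A ω * C ω) + (t₁ + t₂) * C ω ^ 2)
              - (2 * (A ω * C ω) + (t₁ + t₃) * C ω ^ 2)))
            = fun ω => C ω ^ 2 := by
          funext ω
          field_simp
          ring
        rwa [heq] at h2
      have hu : Integrable (fun ω => A ω * C ω) μ := by
        have h1 : Integrable (fun ω => (2 * (A ω * C ω) + (t₁ + t₂) * C ω ^ 2)
            - (t₁ + t₂) * C ω ^ 2) μ := k12.sub (hv.const_mul _)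
        have h2 : Integrable (fun ω => (2:ℝ)⁻¹ *
            ((2 * (A ω * C ω) + (t₁ + t₂) * C ω ^ 2) - (t₁ + t₂) * C ω ^ 2)) μ :=
          h1.const_mul _
        have heq : (fun ω => (2:ℝ)⁻¹ *
            ((2 * (A ω * C ω) + (t₁ + t₂) * C ω ^ 2) - (t₁ + t₂) * C ω ^ 2))
            = fun ω => A ω * C ω := by
          funext ω
          field_simp
          ring
        rwa [heq] at h2
      have hP : Integrable (fun ω => A ω ^ 2) μ := by
        have ha : Integrable (fun ω => 2 * t₁ * (A ω * C ω) + t₁ ^ 2 * C ω ^ 2) μ :=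
          (hu.const_mul (2 * t₁)).add (hv.const_mul (t₁ ^ 2))
        have h1 : Integrable
            (fun ω => g t₁ ω - (2 * t₁ * (A ω * C ω) + t₁ ^ 2 * C ω ^ 2)) μ :=
          hi1.sub ha
        have heq : (fun ω => g t₁ ω - (2 * t₁ * (A ω * C ω) + t₁ ^ 2 * C ω ^ 2))
            = fun ω => A ω ^ 2 := by
          funext ω
          simp only [hg]
          ring
        rwa [heq] at h1
      exact hcase ⟨hP, hu, hv⟩
    -- find a punctured neighborhood of 0 on which g t is not integrable
    have hr : ∃ r : ℝ, 0 < r ∧ ∀ t : ℝ, 0 < |t| → |t| < r → ¬ Integrable (g t) μ := by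
      by_cases h1 : ∃ a : ℝ, a ≠ 0 ∧ Integrable (g a) μ
      · obtain ⟨a, ha0, hai⟩ := h1
        by_cases h2 : ∃ b : ℝ, b ≠ 0 ∧ b ≠ a ∧ Integrable (g b) μ
        · obtain ⟨b, hb0, hba, hbi⟩ := h2
          refine ⟨min |a| |b|, lt_min (abs_pos.mpr ha0) (abs_pos.mpr hb0), ?_⟩
          intro t ht0 htr hti
          have hta : t ≠ a := fun h => by
            rw [h] at htr; exact absurd (min_le_left |a| |b|) (not_le.mpr htr)
          have htb : t ≠ b := fun h => by
            rw [h] at htr; exact absurd (min_le_right |a| |b|) (not_le.mpr htr)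
          exact hS t a b hta htb (Ne.symm hba) hti hai hbi
        · push_neg at h2
          refine ⟨|a|, abs_pos.mpr ha0, ?_⟩
          intro t ht0 htr hti
          have hta : t ≠ a := fun h => by rw [h] at htr; exact lt_irrefl _ htr
          have ht0' : t ≠ 0 := abs_pos.mp ht0
          exact h2 t ht0' hta hti
      · push_neg at h1
        refine ⟨1, one_pos, ?_⟩
        intro t ht0 _ hti
        exact (h1 t (abs_pos.mp ht0)) hti
    obtain ⟨r, hrpos, hnint⟩ := hr
    have hFzero : ∀ t : ℝ, 0 < |t| → |t| < r → F t = 0 := by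
      intro t ht0 htr
      rw [hF]
      exact integral_undef (hnint t ht0 htr)
    -- deriv F vanishes on a punctured neighborhood of 0
    have hderiv_pt : ∀ t : ℝ, 0 < |t| → |t| < r → deriv F t = 0 := by
      intro t ht0 htr
      have hev : F =ᶠ[nhds t] (fun _ => (0:ℝ)) := by
        have hball : Metric.ball t (min |t| (r - |t|)) ∈ nhds t :=
          Metric.ball_mem_nhds t (lt_min ht0 (by linarith))
        filter_upwards [hball] with s hs
        rw [Metric.mem_ball, Real.dist_eq] at hs
        have h1 : 0 < |s| := by
          have h2 : |t - s| < |t| := by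
            rw [abs_sub_comm]; exact lt_of_lt_of_le hs (min_le_left _ _)
          have := abs_sub_abs_le_abs_sub t s
          linarith
        have h2 : |s| < r := by
          have h3 : |s - t| < r - |t| := lt_of_lt_of_le hs (min_le_right _ _)
          have := abs_sub_abs_le_abs_sub s t
          linarith
        exact hFzero s h1 h2
      rw [hev.deriv_eq]
      simp
    have hF0 : deriv F 0 = 0 := by
      by_cases hdiff : DifferentiableAt ℝ F 0
      · have hf00 : F 0 = 0 := by
          have hc : Filter.Tendsto F (nhdsWithin 0 {(0:ℝ)}ᶜ) (nhds (F 0)) :=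
            (hdiff.continuousAt.tendsto).mono_left nhdsWithin_le_nhds
          have h0 : Filter.Tendsto F (nhdsWithin 0 {(0:ℝ)}ᶜ) (nhds 0) := by
            apply Filter.Tendsto.congr' _ tendsto_const_nhds
            have hball : Metric.ball (0:ℝ) r ∈ nhds (0:ℝ) := Metric.ball_mem_nhds 0 hrpos
            have hmem : Metric.ball (0:ℝ) r ∈ nhdsWithin (0:ℝ) {(0:ℝ)}ᶜ :=
              nhdsWithin_le_nhds hball
            filter_upwards [hmem, self_mem_nhdsWithin] with s hs1 hs2
            rw [Metric.mem_ball, Real.dist_eq, sub_zero] at hs1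
            have hs0 : s ≠ 0 := hs2
            exact (hFzero s (abs_pos.mpr hs0) hs1).symm
          exact tendsto_nhds_unique hc h0
        have hev : F =ᶠ[nhds (0:ℝ)] (fun _ => (0:ℝ)) := by
          have hball : Metric.ball (0:ℝ) r ∈ nhds (0:ℝ) := Metric.ball_mem_nhds 0 hrpos
          filter_upwards [hball] with s hs
          rw [Metric.mem_ball, Real.dist_eq, sub_zero] at hs
          rcases eq_or_ne s 0 with h | h
          · rw [h]; exact hf00
          · exact hFzero s (abs_pos.mpr h) hs
        rw [hev.deriv_eq]
        simp
      · exact deriv_zero_of_not_differentiableAt hdiff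
    have hev2 : deriv F =ᶠ[nhds (0:ℝ)] (fun _ => (0:ℝ)) := by
      have hball : Metric.ball (0:ℝ) r ∈ nhds (0:ℝ) := Metric.ball_mem_nhds 0 hrpos
      filter_upwards [hball] with s hs
      rw [Metric.mem_ball, Real.dist_eq, sub_zero] at hs
      rcases eq_or_ne s 0 with h | h
      · rw [h]; exact hF0
      · exact hderiv_pt s (abs_pos.mpr h) hs
    have hiter : iteratedDeriv 2 F 0 = 0 := by
      rw [show (2:ℕ) = 1 + 1 from rfl, iteratedDeriv_succ, iteratedDeriv_one]
      rw [hev2.deriv_eq]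
      simp
    rw [hFdef] at hiter
    rw [hiter]
    simpa using hRHSnn
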